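/- If G is a PCG, then any graph obtained from G by adding a new vertex of degree 1 (adjacent to a single existing vertex) is also a PCG. -/

import Mathlib

open SimpleGraph

/-- An edge-weighted tree: a connected acyclic simple graph together with a
symmetric nonnegative real weight function on (pairs of) vertices. -/
structure WTree (W : Type) where
  g : SimpleGraph W
  conn : g.Connected
  acyclic : g.IsAcyclic
  wt : W → W → ℝ
  wt_symm : ∀ u v, wt u v = wt v u
  wt_nonneg : ∀ u v, 0 ≤ wt u v

namespace WTree

variable {W : Type}

/-- The total weight of a walk in a weighted tree. -/
def walkWeight (T : WTree W) : {u v : W} → T.g.Walk u v → ℝ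
  | _, _, .nil => 0
  | _, _, .cons (u := a) (v := b) _ p => T.wt a b + T.walkWeight p

/-- The weighted distance between two vertices of a weighted tree:
the total weight of the unique path joining them. -/
noncomputable def dist (T : WTree W) (u v : W) : ℝ :=
  letI := Classical.decEq W
  T.walkWeight (((T.conn.preconnected u v).some.toPath : T.g.Path u v) : T.g.Walk u v)

/-- A leaf of a tree: a vertex with exactly one neighbor. -/
def IsLeaf (T : WTree W) (v : W) : Prop := ∃! u, T.g.Adj v u

-- auxiliary lemmas

lemma walkWeight_nonneg (T : WTree W) : ∀ {u v : W} (p : T.g.Walk u v), 0 ≤ T.walkWeight p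
  | _, _, .nil => le_refl 0
  | _, _, .cons h p => add_nonneg (T.wt_nonneg _ _) (T.walkWeight_nonneg p)

lemma dist_eq (T : WTree W) {u v : W} (p : T.g.Walk u v) (hp : p.IsPath) :
    T.dist u v = T.walkWeight p := by
  unfold dist
  letI := Classical.decEq W
  have h := T.acyclic.path_unique ((T.conn.preconnected u v).some.toPath) ⟨p, hp⟩
  rw [h]

lemma exists_dist_path (T : WTree W) (u v : W) :
    ∃ p : T.g.Walk u v, p.IsPath ∧ T.dist u v = T.walkWeight p := by
  letI := Classical.decEq W
  exact ⟨_, ((T.conn.preconnected u v).some.toPath).2, T.dist_eq _ ((T.conn.preconnected u v).some.toPath).2⟩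

lemma dist_nonneg (T : WTree W) (u v : W) : 0 ≤ T.dist u v := by
  obtain ⟨p, hp, e⟩ := T.exists_dist_path u v
  rw [e]; exact T.walkWeight_nonneg p

lemma dist_self (T : WTree W) (u : W) : T.dist u u = 0 := by
  rw [T.dist_eq Walk.nil Walk.IsPath.nil]; rfl

lemma walkWeight_append (T : WTree W) {u v w : W} (p : T.g.Walk u v) (q : T.g.Walk v w) :
    T.walkWeight (p.append q) = T.walkWeight p + T.walkWeight q := by
  induction p with
  | nil => simp [walkWeight]
  | cons h p ih => simp only [Walk.cons_append, walkWeight, ih]; ring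

lemma walkWeight_reverse (T : WTree W) {u v : W} (p : T.g.Walk u v) :
    T.walkWeight p.reverse = T.walkWeight p := by
  induction p with
  | nil => rfl
  | cons h p ih =>
      rw [Walk.reverse_cons, walkWeight_append, ih]
      simp only [walkWeight, T.wt_symm]; ring

lemma dist_comm (T : WTree W) (u v : W) : T.dist u v = T.dist v u := by
  obtain ⟨p, hp, e⟩ := T.exists_dist_path v u
  rw [e, ← T.walkWeight_reverse p, ← T.dist_eq p.reverse hp.reverse]


end WTree

section Bump
open WTree
variable {W : Type}

open Classical in
noncomputable def WTree.chi (T : WTree W) (S : ℝ) (w : W) : ℝ :=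
  if T.IsLeaf w then S else 0

lemma WTree.chi_of_leaf (T : WTree W) (S : ℝ) {w : W} (h : T.IsLeaf w) : T.chi S w = S := by
  unfold WTree.chi; rw [if_pos h]

lemma WTree.chi_of_not_leaf (T : WTree W) (S : ℝ) {w : W} (h : ¬ T.IsLeaf w) : T.chi S w = 0 := by
  unfold WTree.chi; rw [if_neg h]

lemma WTree.chi_nonneg (T : WTree W) (S : ℝ) (hS : 0 ≤ S) (w : W) : 0 ≤ T.chi S w := by
  unfold WTree.chi; split_ifs <;> simp [hS]

/-- Increase the weight of every edge incident to a leaf by `S`. -/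
noncomputable def WTree.bump (T : WTree W) (S : ℝ) (hS : 0 ≤ S) : WTree W where
  g := T.g
  conn := T.conn
  acyclic := T.acyclic
  wt := fun u v => T.wt u v + T.chi S u + T.chi S v
  wt_symm := fun u v => by
    show T.wt u v + T.chi S u + T.chi S v = T.wt v u + T.chi S v + T.chi S u
    rw [T.wt_symm]; ring
  wt_nonneg := fun u v => by
    have h1 := T.wt_nonneg u v
    have h2 := T.chi_nonneg S hS u
    have h3 := T.chi_nonneg S hS v
    linarith

lemma WTree.bump_walkWeight (T : WTree W) (S : ℝ) (hS : 0 ≤ S) :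
    ∀ {u v : W} (p : T.g.Walk u v), p.IsPath → T.IsLeaf v → u ≠ v →
      (T.bump S hS).walkWeight p = T.walkWeight p + T.chi S u + T.chi S v := by
  intro u v p
  induction p with
  | nil => intro _ _ hne; exact absurd rfl hne
  | @cons u w v h q ih =>
    intro hp hv _
    cases q with
    | nil =>
      show T.wt u w + T.chi S u + T.chi S w + 0 = T.wt u w + 0 + T.chi S u + T.chi S w
      ring
    | @cons w t v h' r =>
      have hq : (Walk.cons h' r).IsPath := hp.of_cons
      have hwv : w ≠ v := by
        rw [Walk.cons_isPath_iff] at hq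
        exact fun e => hq.2 (e ▸ r.end_mem_support)
      have hut : u ≠ t := by
        rw [Walk.cons_isPath_iff] at hp
        intro e
        exact hp.2 (by rw [Walk.support_cons]; exact List.mem_cons_of_mem _ (e ▸ r.start_mem_support))
      have hwleaf : ¬ T.IsLeaf w := by
        rintro ⟨n, hn, hu⟩
        exact hut ((hu u h.symm).trans (hu t h').symm)
      have key := ih hq hv hwv
      show (T.bump S hS).wt u w + (T.bump S hS).walkWeight (Walk.cons h' r)
        = T.wt u w + T.walkWeight (Walk.cons h' r) + T.chi S u + T.chi S v
      erw [key]
      show T.wt u w + T.chi S u + T.chi S w + (T.walkWeight (Walk.cons h' r) + T.chi S w + T.chi S v)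
        = T.wt u w + T.walkWeight (Walk.cons h' r) + T.chi S u + T.chi S v
      rw [T.chi_of_not_leaf S hwleaf]
      ring

lemma WTree.bump_dist (T : WTree W) (S : ℝ) (hS : 0 ≤ S) {u v : W}
    (hu : T.IsLeaf u) (hv : T.IsLeaf v) (hne : u ≠ v) :
    (T.bump S hS).dist u v = T.dist u v + 2 * S := by
  obtain ⟨p, hp, e⟩ := T.exists_dist_path u v
  have h2 : (T.bump S hS).dist u v = (T.bump S hS).walkWeight p := (T.bump S hS).dist_eq p hp
  rw [h2, T.bump_walkWeight S hS p hp hv hne, e, T.chi_of_leaf S hu, T.chi_of_leaf S hv]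
  ring

end Bump

section Pendant
open WTree
variable {W : Type}

/-- The graph obtained by attaching a new pendant vertex `none` to the vertex `c`. -/
def pendantGraph (T : WTree W) (c : W) : SimpleGraph (Option W) where
  Adj a b := (∃ u v, a = some u ∧ b = some v ∧ T.g.Adj u v) ∨
    (a = none ∧ b = some c) ∨ (a = some c ∧ b = none)
  symm := by
    refine ⟨?_⟩
    rintro a b (⟨u, v, rfl, rfl, h⟩ | ⟨rfl, rfl⟩ | ⟨rfl, rfl⟩)
    · exact Or.inl ⟨v, u, rfl, rfl, h.symm⟩
    · exact Or.inr (Or.inr ⟨rfl, rfl⟩)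
    · exact Or.inr (Or.inl ⟨rfl, rfl⟩)
  loopless := by
    refine ⟨?_⟩
    rintro a (⟨u, v, rfl, hb, h⟩ | ⟨rfl, hb⟩ | ⟨rfl, hb⟩)
    · rw [Option.some_inj] at hb; exact h.ne hb
    · exact (nomatch hb)
    · exact (nomatch hb)

@[simp] lemma pendantGraph_adj_some_some (T : WTree W) (c : W) {u v : W} :
    (pendantGraph T c).Adj (some u) (some v) ↔ T.g.Adj u v := by
  constructor
  · rintro (⟨u', v', hu, hv, h⟩ | ⟨h, _⟩ | ⟨_, h⟩)
    · rw [Option.some_inj] at hu hv; rwa [hu, hv]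
    · exact (nomatch h)
    · exact (nomatch h)
  · exact fun h => Or.inl ⟨u, v, rfl, rfl, h⟩

@[simp] lemma pendantGraph_adj_none (T : WTree W) (c : W) {b : Option W} :
    (pendantGraph T c).Adj none b ↔ b = some c := by
  constructor
  · rintro (⟨u, v, hu, _, _⟩ | ⟨_, rfl⟩ | ⟨h, _⟩)
    · exact (nomatch hu)
    · rfl
    · exact (nomatch h)
  · rintro rfl; exact Or.inr (Or.inl ⟨rfl, rfl⟩)

@[simp] lemma pendantGraph_adj_some_none (T : WTree W) (c : W) {u : W} :
    (pendantGraph T c).Adj (some u) none ↔ u = c := by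
  constructor
  · rintro (⟨u', v', _, hv, _⟩ | ⟨h, _⟩ | ⟨h, _⟩)
    · exact (nomatch hv)
    · exact (nomatch h)
    · rw [Option.some_inj] at h; exact h
  · rintro rfl; exact Or.inr (Or.inr ⟨rfl, rfl⟩)

/-- The embedding of the old tree into the pendant extension. -/
def pendantHom (T : WTree W) (c : W) : T.g →g pendantGraph T c where
  toFun := some
  map_rel' := fun h => Or.inl ⟨_, _, rfl, rfl, h⟩

lemma pendantGraph_connected (T : WTree W) (c : W) : (pendantGraph T c).Connected := by
  have key : ∀ a : Option W, (pendantGraph T c).Reachable a (some c) := by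
    rintro (_ | w)
    · exact ((pendantGraph_adj_none T c).2 rfl).reachable
    · exact (T.conn.preconnected w c).map (pendantHom T c)
  haveI : Nonempty (Option W) := ⟨none⟩
  exact ⟨fun a b => (key a).trans (key b).symm⟩

lemma pendantGraph_lift (T : WTree W) (c : W) :
    ∀ {a b : Option W} (p : (pendantGraph T c).Walk a b), (none ∉ p.support) →
      ∀ {u v : W} (ha : a = some u) (hb : b = some v),
        ∃ q : T.g.Walk u v, q.map (pendantHom T c) = p.copy ha hb := by
  intro a b p
  induction p with
  | nil =>
    rintro _ u v rfl hb
    rw [Option.some_inj] at hb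
    subst hb
    exact ⟨Walk.nil, rfl⟩
  | @cons a m b h p ih =>
    intro hn u v ha hb
    subst ha; subst hb
    have hm : m ∈ (Walk.cons h p).support := by
      rw [Walk.support_cons]; exact List.mem_cons_of_mem _ p.start_mem_support
    obtain ⟨m', rfl⟩ : ∃ m', m = some m' := by
      cases m with
      | none => exact absurd hm hn
      | some m' => exact ⟨m', rfl⟩
    have hn' : none ∉ p.support := fun hmem => hn (by rw [Walk.support_cons]; exact List.mem_cons_of_mem _ hmem)
    obtain ⟨q, hq⟩ := ih hn' rfl rfl
    rw [Walk.copy_rfl_rfl] at hq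
    refine ⟨Walk.cons ((pendantGraph_adj_some_some T c).1 h) q, ?_⟩
    rw [Walk.copy_rfl_rfl, Walk.map_cons, hq]; rfl

lemma pendantGraph_acyclic (T : WTree W) (c : W) : (pendantGraph T c).IsAcyclic := by
  classical
  intro v p hp
  by_cases hn : (none : Option W) ∈ p.support
  · set q := p.rotate none hn with hq
    have hqc : q.IsCycle := hp.rotate hn
    cases hq' : q with
    | nil => exact hqc.ne_nil hq'
    | @cons _ m _ h r =>
      rw [hq'] at hqc
      obtain rfl : m = some c := (pendantGraph_adj_none T c).1 h
      cases hr : r.reverse with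
      | @cons _ y _ h2 r2 =>
        obtain rfl : y = some c := (pendantGraph_adj_none T c).1 h2
        have hmem : s(none, some c) ∈ r.reverse.edges := by
          rw [hr, Walk.edges_cons]
          exact List.mem_cons_self
        rw [Walk.edges_reverse, List.mem_reverse] at hmem
        exact ((Walk.isTrail_cons h r).1 hqc.isCircuit.isTrail).2 hmem
  · obtain ⟨v', rfl⟩ : ∃ v', v = some v' := by
      cases v with
      | none => exact absurd p.start_mem_support hn
      | some v' => exact ⟨v', rfl⟩
    obtain ⟨q, hq⟩ := pendantGraph_lift T c p hn rfl rfl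
    rw [Walk.copy_rfl_rfl] at hq
    subst hq
    exact T.acyclic q ((Walk.map_isCycle_iff_of_injective (Option.some_injective W)).1 hp)

end Pendant

section Pendant2
open WTree
variable {W : Type}

def pendantWt (T : WTree W) (w0 : ℝ) : Option W → Option W → ℝ
  | some u, some v => T.wt u v
  | none, none => 0
  | _, _ => w0

/-- The weighted tree obtained by attaching a pendant vertex `none` to `c` with edge weight `w0`. -/
def WTree.pendant (T : WTree W) (c : W) (w0 : ℝ) (hw0 : 0 ≤ w0) : WTree (Option W) where
  g := pendantGraph T c
  conn := pendantGraph_connected T c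
  acyclic := pendantGraph_acyclic T c
  wt := pendantWt T w0
  wt_symm := by
    rintro (_ | u) (_ | v) <;> simp only [pendantWt]
    exact T.wt_symm u v
  wt_nonneg := by
    rintro (_ | u) (_ | v) <;> simp only [pendantWt, le_refl, hw0]
    exact T.wt_nonneg u v

lemma pendant_walkWeight_map (T : WTree W) (c : W) (w0 : ℝ) (hw0 : 0 ≤ w0)
    {u v : W} (p : T.g.Walk u v) :
    (T.pendant c w0 hw0).walkWeight (p.map (pendantHom T c)) = T.walkWeight p := by
  induction p with
  | nil => rfl
  | cons h p ih =>
    rw [Walk.map_cons]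
    show pendantWt T w0 (some _) (some _) + (T.pendant c w0 hw0).walkWeight (p.map (pendantHom T c))
      = T.wt _ _ + T.walkWeight p
    rw [ih]; rfl

lemma pendant_dist_some_some (T : WTree W) (c : W) (w0 : ℝ) (hw0 : 0 ≤ w0) (u v : W) :
    (T.pendant c w0 hw0).dist (some u) (some v) = T.dist u v := by
  obtain ⟨p, hp, e⟩ := T.exists_dist_path u v
  have h1 := (T.pendant c w0 hw0).dist_eq (p.map (pendantHom T c))
    (Walk.map_isPath_of_injective (Option.some_injective W) hp)
  rw [pendant_walkWeight_map] at h1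
  exact h1.trans e.symm

lemma pendant_dist_none_some (T : WTree W) (c : W) (w0 : ℝ) (hw0 : 0 ≤ w0) (u : W) :
    (T.pendant c w0 hw0).dist none (some u) = w0 + T.dist c u := by
  obtain ⟨p, hp, e⟩ := T.exists_dist_path c u
  have hadj : (pendantGraph T c).Adj none (some c) := (pendantGraph_adj_none T c).2 rfl
  have hpath : (Walk.cons hadj (p.map (pendantHom T c))).IsPath := by
    refine (Walk.cons_isPath_iff _ _).2 ?_
    refine ⟨Walk.map_isPath_of_injective (Option.some_injective W) hp, ?_⟩
    erw [Walk.support_map]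
    rintro hmem
    obtain ⟨w, _, hw⟩ := List.mem_map.1 hmem
    exact (nomatch hw)
  have h1 := (T.pendant c w0 hw0).dist_eq _ hpath
  have h2 : (T.pendant c w0 hw0).walkWeight (Walk.cons hadj (p.map (pendantHom T c)))
      = w0 + T.walkWeight p := by
    show pendantWt T w0 none (some c) + (T.pendant c w0 hw0).walkWeight (p.map (pendantHom T c))
      = w0 + T.walkWeight p
    rw [pendant_walkWeight_map]; rfl
  exact h1.trans (h2.trans (by rw [e]))

lemma pendant_isLeaf_none (T : WTree W) (c : W) (w0 : ℝ) (hw0 : 0 ≤ w0) :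
    (T.pendant c w0 hw0).IsLeaf none := by
  refine ⟨some c, (pendantGraph_adj_none T c).2 rfl, fun y hy => ?_⟩
  exact (pendantGraph_adj_none T c).1 hy

lemma pendant_isLeaf_some (T : WTree W) (c : W) (w0 : ℝ) (hw0 : 0 ≤ w0)
    (hc : ∃ p, T.g.Adj c p) (w : W) :
    (T.pendant c w0 hw0).IsLeaf (some w) ↔ T.IsLeaf w ∧ w ≠ c := by
  constructor
  · rintro ⟨y, hy, hu⟩
    cases y with
    | none =>
      have hwc : w = c := (pendantGraph_adj_some_none T c).1 hy
      obtain ⟨p, hp⟩ := hc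
      have h2 : T.g.Adj w p := by rw [hwc]; exact hp
      have := hu (some p) ((pendantGraph_adj_some_some T c).2 h2)
      exact (nomatch this)
    | some y' =>
      have hadj : T.g.Adj w y' := (pendantGraph_adj_some_some T c).1 hy
      have hwc : w ≠ c := by
        intro hwc
        have := hu none ((pendantGraph_adj_some_none T c).2 hwc)
        exact (nomatch this)
      refine ⟨⟨y', hadj, fun z hz => ?_⟩, hwc⟩
      have := hu (some z) ((pendantGraph_adj_some_some T c).2 hz)
      exact Option.some_injective W this
  · rintro ⟨⟨y, hy, hu⟩, hwc⟩
    refine ⟨some y, (pendantGraph_adj_some_some T c).2 hy, ?_⟩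
    rintro (_ | z) hz
    · exact absurd ((pendantGraph_adj_some_none T c).1 hz) hwc
    · exact congrArg some (hu z ((pendantGraph_adj_some_some T c).1 hz))

end Pendant2

/-- `G` is realized as a pairwise compatibility graph by the weighted tree `T`,
the set `I` of real numbers, and the map `f` identifying the vertices of `G`
with the leaves of `T`. -/
def IsPCGOn {V W : Type} (G : SimpleGraph V) (T : WTree W) (I : Set ℝ) (f : V → W) : Prop :=
  Function.Injective f ∧ (∀ v, T.IsLeaf (f v)) ∧ (∀ w, T.IsLeaf w → ∃ v, f v = w) ∧
    ∀ u v, u ≠ v → (G.Adj u v ↔ T.dist (f u) (f v) ∈ I)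

/-- A graph is a PCG if it is realized by some finite weighted tree together with
an interval `[a, b]` of nonnegative reals. -/
def IsPCG {V : Type} (G : SimpleGraph V) : Prop :=
  ∃ (W : Type) (_ : Fintype W) (T : WTree W) (a b : ℝ) (f : V → W),
    0 ≤ a ∧ IsPCGOn G T (Set.Icc a b) f

/-- A graph is a `k`-interval-PCG if it is realized by a finite weighted tree together
with `k` pairwise disjoint intervals of nonnegative reals, an edge being present iff
the corresponding leaf distance lies in one of the intervals. -/
def IsKIntervalPCG {V : Type} (k : ℕ) (G : SimpleGraph V) : Prop :=
  ∃ (W : Type) (_ : Fintype W) (T : WTree W) (I : Fin k → Set ℝ) (f : V → W),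
    (∀ i, ∃ a b : ℝ, 0 ≤ a ∧ I i = Set.Icc a b) ∧
    Pairwise (Function.onFun Disjoint I) ∧
    Function.Injective f ∧ (∀ v, T.IsLeaf (f v)) ∧ (∀ w, T.IsLeaf w → ∃ v, f v = w) ∧
    ∀ u v, u ≠ v → (G.Adj u v ↔ ∃ i, T.dist (f u) (f v) ∈ I i)

/-- A graph is a `k`-OR-PCG if its edge set is the union of the edge sets of `k` PCGs
on the same vertex set. -/
def IsORPCG {V : Type} (k : ℕ) (G : SimpleGraph V) : Prop :=
  ∃ Gs : Fin k → SimpleGraph V, (∀ i, IsPCG (Gs i)) ∧ G = ⨆ i, Gs i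

/-- A graph is a `k`-AND-PCG if its edge set is the intersection of the edge sets of
`k` PCGs on the same vertex set. -/
def IsANDPCG {V : Type} (k : ℕ) (G : SimpleGraph V) : Prop :=
  ∃ Gs : Fin k → SimpleGraph V, (∀ i, IsPCG (Gs i)) ∧ G = ⨅ i, Gs i

/-- If `G` is a PCG, then the graph obtained from `G` by adding a new vertex of degree 1,
adjacent exactly to the existing vertex `x`, is also a PCG. The new graph lives on `Option V`,
with `none` being the new pendant vertex. -/
theorem isPCG_addPendant {V : Type} [Fintype V] (G : SimpleGraph V) (h : IsPCG G) (x : V) :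
    IsPCG (SimpleGraph.fromRel (fun a b : Option V =>
      (∃ u v : V, a = some u ∧ b = some v ∧ G.Adj u v) ∨ (a = none ∧ b = some x))) := by
  classical
  obtain ⟨W, instW, T, a0, b0, f, ha0, hinj, hleaf, hsurj, hadj0⟩ := h
  -- Step 1: normalize the interval so that `a ≤ b`.
  obtain ⟨a, b, ha, hab, hadj⟩ : ∃ a b : ℝ, 0 ≤ a ∧ a ≤ b ∧
      ∀ u v, u ≠ v → (G.Adj u v ↔ T.dist (f u) (f v) ∈ Set.Icc a b) := by
    by_cases hab : a0 ≤ b0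
    · exact ⟨a0, b0, ha0, hab, hadj0⟩
    · have hsum : (0:ℝ) ≤ ∑ p : W × W, T.dist p.1 p.2 :=
        Finset.sum_nonneg fun p _ => T.dist_nonneg _ _
      refine ⟨1 + ∑ p : W × W, T.dist p.1 p.2, 1 + ∑ p : W × W, T.dist p.1 p.2,
        by linarith, le_refl _, ?_⟩
      intro u v huv
      have h1 := hadj0 u v huv
      have h2 : T.dist (f u) (f v) ∉ Set.Icc a0 b0 := by
        rw [Set.mem_Icc]; rintro ⟨hx1, hx2⟩; exact hab (le_trans hx1 hx2)
      have hle : T.dist (f u) (f v) ≤ ∑ p : W × W, T.dist p.1 p.2 :=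
        Finset.single_le_sum (f := fun p : W × W => T.dist p.1 p.2)
          (fun p _ => T.dist_nonneg _ _) (Finset.mem_univ (f u, f v))
      constructor
      · intro hGa; exact absurd (h1.1 hGa) h2
      · rw [Set.mem_Icc]; rintro ⟨hx1, _⟩; linarith
  -- Step 2: bump all leaf edges by S
  set S : ℝ := b - a + 1 with hSdef
  have hS : 0 ≤ S := by rw [hSdef]; linarith
  set T1 := T.bump S hS with hT1
  set a1 := a + 2 * S with ha1def
  set b1 := b + 2 * S with hb1def
  have ha1 : 0 ≤ a1 := by rw [ha1def]; linarith
  have hab1 : a1 ≤ b1 := by rw [ha1def, hb1def]; linarith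
  have hleaf1 : ∀ v, T1.IsLeaf (f v) := hleaf
  have hdist1 : ∀ u v : V, u ≠ v → T1.dist (f u) (f v) = T.dist (f u) (f v) + 2 * S :=
    fun u v huv => T.bump_dist S hS (hleaf u) (hleaf v) (fun e => huv (hinj e))
  have hadj1 : ∀ u v, u ≠ v → (G.Adj u v ↔ T1.dist (f u) (f v) ∈ Set.Icc a1 b1) := by
    intro u v huv
    rw [hadj u v huv, hdist1 u v huv, Set.mem_Icc, Set.mem_Icc, ha1def, hb1def]
    constructor <;> rintro ⟨h1, h2⟩ <;> constructor <;> linarith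
  have hfar : ∀ v, v ≠ x → b1 < a1 + T1.dist (f x) (f v) := by
    intro v hvx
    rw [hdist1 x v (fun e => hvx e.symm)]
    have hd := T.dist_nonneg (f x) (f v)
    rw [ha1def, hb1def, hSdef]; linarith
  have hsurj1 : ∀ w, T1.IsLeaf w → ∃ v, f v = w := hsurj
  clear hdist1 hadj hadj0 ha hleaf hsurj
  -- Step 3: attach the twin leaf `zx = none` to `f x` with weight 0
  have hcx : ∃ p, T1.g.Adj (f x) p := by obtain ⟨p, hp, -⟩ := hleaf1 x; exact ⟨p, hp⟩
  set T2 := T1.pendant (f x) 0 le_rfl with hT2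
  have hcx2 : ∃ p, T2.g.Adj (some (f x)) p :=
    ⟨none, (pendantGraph_adj_some_none T1 (f x)).2 rfl⟩
  -- Step 4: attach the new leaf `z = none` to `some (f x)` with weight a1
  set T3 := T2.pendant (some (f x)) a1 ha1 with hT3
  set f' : Option V → Option (Option W) :=
    fun o => Option.elim o none (fun v => if v = x then some none else some (some (f v))) with hf'
  have hfn : f' none = none := rfl
  have hfx : f' (some x) = some none := by rw [hf']; simp
  have hfv : ∀ v, v ≠ x → f' (some v) = some (some (f v)) := by
    intro v hv; rw [hf']; simp [hv]
  -- distances in T3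
  have hd2ss : ∀ w1 w2 : Option W, T3.dist (some w1) (some w2) = T2.dist w1 w2 :=
    pendant_dist_some_some T2 (some (f x)) a1 ha1
  have hd2n : ∀ w' : Option W, T3.dist none (some w') = a1 + T2.dist (some (f x)) w' :=
    pendant_dist_none_some T2 (some (f x)) a1 ha1
  have hd1ss : ∀ w1 w2 : W, T2.dist (some w1) (some w2) = T1.dist w1 w2 :=
    pendant_dist_some_some T1 (f x) 0 le_rfl
  have hd1n : ∀ w : W, T2.dist none (some w) = T1.dist (f x) w := by
    intro w
    rw [pendant_dist_none_some T1 (f x) 0 le_rfl w, zero_add]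
  have hDss : ∀ u v : V, T3.dist (f' (some u)) (f' (some v)) = T1.dist (f u) (f v) := by
    intro u v
    by_cases hu : u = x <;> by_cases hv : v = x
    · rw [hu, hv, hfx, hd2ss, T2.dist_self, T1.dist_self]
    · rw [hu, hfx, hfv v hv, hd2ss, hd1n]
    · rw [hv, hfv u hu, hfx, hd2ss, T2.dist_comm, hd1n, T1.dist_comm]
    · rw [hfv u hu, hfv v hv, hd2ss, hd1ss]
  have hDnx : T3.dist (f' none) (f' (some x)) = a1 := by
    rw [hfn, hfx, hd2n, T2.dist_comm, hd1n, T1.dist_self, add_zero]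
  have hDnv : ∀ v : V, v ≠ x → T3.dist (f' none) (f' (some v)) = a1 + T1.dist (f x) (f v) := by
    intro v hv
    rw [hfn, hfv v hv, hd2n, hd1ss]
  -- adjacency in the new graph
  set r : Option V → Option V → Prop := fun a b =>
    (∃ u v : V, a = some u ∧ b = some v ∧ G.Adj u v) ∨ (a = none ∧ b = some x) with hr
  have hG'ss : ∀ u v : V, u ≠ v →
      ((SimpleGraph.fromRel r).Adj (some u) (some v) ↔ G.Adj u v) := by
    intro u v huv
    rw [SimpleGraph.fromRel_adj]
    constructor
    · rintro ⟨-, (⟨u', v', h1, h2, hG⟩ | ⟨h1, -⟩) | (⟨u', v', h1, h2, hG⟩ | ⟨h1, -⟩)⟩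
      · rw [Option.some_inj] at h1 h2; rw [h1, h2]; exact hG
      · exact (nomatch h1)
      · rw [Option.some_inj] at h1 h2; rw [h1, h2]; exact hG.symm
      · exact (nomatch h1)
    · intro hG
      exact ⟨fun e => huv (Option.some_injective V e), Or.inl (Or.inl ⟨u, v, rfl, rfl, hG⟩)⟩
  have hG'n : ∀ v : V, ((SimpleGraph.fromRel r).Adj none (some v) ↔ v = x) := by
    intro v
    rw [SimpleGraph.fromRel_adj]
    constructor
    · rintro ⟨-, (⟨u', v', h1, -, -⟩ | ⟨-, h2⟩) | (⟨u', v', -, h2, -⟩ | ⟨h1, -⟩)⟩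
      · exact (nomatch h1)
      · rw [Option.some_inj] at h2; exact h2
      · exact (nomatch h2)
      · exact (nomatch h1)
    · rintro rfl
      exact ⟨fun e => (nomatch e), Or.inl (Or.inr ⟨rfl, rfl⟩)⟩
  refine ⟨Option (Option W), inferInstance, T3, a1, b1, f', ha1, ?_, ?_, ?_, ?_⟩
  · -- injectivity
    rintro (_ | u) (_ | v) he
    · rfl
    · exfalso
      by_cases hv : v = x
      · rw [hv] at he; rw [hfn, hfx] at he; exact (nomatch he)
      · rw [hfn, hfv v hv] at he; exact (nomatch he)
    · exfalso
      by_cases hu : u = x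
      · rw [hu] at he; rw [hfn, hfx] at he; exact (nomatch he.symm)
      · rw [hfn, hfv u hu] at he; exact (nomatch he.symm)
    · by_cases hu : u = x <;> by_cases hv : v = x
      · rw [hu, hv]
      · rw [hu] at he
        rw [hfx, hfv v hv] at he
        exact absurd (Option.some_injective _ he) (fun e => (nomatch e))
      · rw [hv] at he
        rw [hfx, hfv u hu] at he
        exact absurd (Option.some_injective _ he) (fun e => (nomatch e.symm))
      · rw [hfv u hu, hfv v hv] at he
        have := hinj (Option.some_injective _ (Option.some_injective _ he))
        rw [this]
  · -- all images are leaves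
    rintro (_ | v)
    · rw [hfn]
      exact pendant_isLeaf_none T2 (some (f x)) a1 ha1
    · by_cases hv : v = x
      · rw [hv, hfx]
        refine (pendant_isLeaf_some T2 (some (f x)) a1 ha1 hcx2 none).2
          ⟨pendant_isLeaf_none T1 (f x) 0 le_rfl, fun e => (nomatch e)⟩
      · rw [hfv v hv]
        refine (pendant_isLeaf_some T2 (some (f x)) a1 ha1 hcx2 (some (f v))).2
          ⟨(pendant_isLeaf_some T1 (f x) 0 le_rfl hcx (f v)).2
            ⟨hleaf1 v, fun e => hv (hinj e)⟩,
           fun e => hv (hinj (Option.some_injective _ e))⟩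
  · -- surjectivity onto leaves
    rintro (_ | (_ | w)) hw
    · exact ⟨none, rfl⟩
    · exact ⟨some x, hfx⟩
    · obtain ⟨h1, -⟩ := (pendant_isLeaf_some T2 (some (f x)) a1 ha1 hcx2 (some w)).1 hw
      obtain ⟨h2, hne1⟩ := (pendant_isLeaf_some T1 (f x) 0 le_rfl hcx w).1 h1
      obtain ⟨v, rfl⟩ := hsurj1 w h2
      have hvx : v ≠ x := fun e => hne1 (by rw [e])
      exact ⟨some v, hfv v hvx⟩
  · -- the adjacency condition
    rintro (_ | u) (_ | v) hne
    · exact absurd rfl hne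
    · -- none vs some v
      rw [hG'n v]
      by_cases hv : v = x
      · rw [hv, hDnx, Set.mem_Icc]
        exact ⟨fun _ => ⟨le_refl a1, hab1⟩, fun _ => rfl⟩
      · rw [hDnv v hv, Set.mem_Icc]
        constructor
        · intro e; exact absurd e hv
        · rintro ⟨-, h2⟩; exact absurd h2 (not_le.2 (hfar v hv))
    · -- some u vs none
      rw [SimpleGraph.adj_comm, T3.dist_comm, hG'n u]
      by_cases hu : u = x
      · rw [hu, hDnx, Set.mem_Icc]
        exact ⟨fun _ => ⟨le_refl a1, hab1⟩, fun _ => rfl⟩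
      · rw [hDnv u hu, Set.mem_Icc]
        constructor
        · intro e; exact absurd e hu
        · rintro ⟨-, h2⟩; exact absurd h2 (not_le.2 (hfar u hu))
    · -- some u vs some v
      have huv : u ≠ v := fun e => hne (by rw [e])
      rw [hG'ss u v huv, hDss u v]
      exact hadj1 u v huv
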